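/- With ω_n = (−1)^{n−1}(n−3)! for n ≥ 3 (so Ω_0(y) = Σ_{n≥3} (−1)^{n−1}(n−3)! y^n/n!), the fixed-point series y_0 defined by y_0 = x + Ω_0'(y_0), y_0(0)=0, satisfies (1+y_0)log(1+y_0) = 2y_0 − x as formal power series. -/

import Mathlib

open PowerSeries

/-- Composition `F(y)` of formal power series, valid when `y` has zero constant term. -/
noncomputable def PowerSeries.comp (F y : PowerSeries ℚ) : PowerSeries ℚ :=
  PowerSeries.mk fun N => ∑ n ∈ Finset.range (N + 1),
    (PowerSeries.coeff n F) * (PowerSeries.coeff N (y ^ n))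

/-- The formal logarithm series `log(1+t) = Σ_{n≥1} (-1)^{n+1} t^n / n`. -/
noncomputable def formalLog : PowerSeries ℚ :=
  PowerSeries.mk fun n => if n = 0 then 0 else (-1 : ℚ) ^ (n + 1) / n

section CompLemmas

open Finset

variable {y : PowerSeries ℚ} (hy0 : PowerSeries.constantCoeff y = 0)

private lemma coeff_pow_zero (hy0 : PowerSeries.constantCoeff y = 0)
    {i a : ℕ} (h : a < i) : PowerSeries.coeff a (y ^ i) = 0 := by
  have hdvd : (PowerSeries.X : PowerSeries ℚ) ^ i ∣ y ^ i :=
    pow_dvd_pow_of_dvd (PowerSeries.X_dvd_iff.mpr hy0) i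
  exact PowerSeries.X_pow_dvd_iff.mp hdvd a h

private lemma aeval_coeff (hy0 : PowerSeries.constantCoeff y = 0)
    (p : Polynomial ℚ) (k : ℕ) :
    PowerSeries.coeff k (Polynomial.aeval y p) =
      ∑ i ∈ range (k + 1), p.coeff i * PowerSeries.coeff k (y ^ i) := by
  set M := max (p.natDegree + 1) (k + 1) with hM
  have hdeg : p.natDegree < M := lt_of_lt_of_le (Nat.lt_succ_self _) (le_max_left _ _)
  rw [Polynomial.aeval_eq_sum_range' hdeg y, map_sum]
  have h1 : ∀ i ∈ range M, PowerSeries.coeff k (p.coeff i • y ^ i)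
      = p.coeff i * PowerSeries.coeff k (y ^ i) := by
    intro i _
    rw [PowerSeries.coeff_smul, smul_eq_mul]
  rw [Finset.sum_congr rfl h1]
  symm
  apply Finset.sum_subset
  · intro i hi
    rw [mem_range] at hi ⊢
    exact lt_of_lt_of_le hi (le_max_right _ _)
  · intro i _ hi
    rw [mem_range, not_lt] at hi
    rw [coeff_pow_zero hy0 hi, mul_zero]

private lemma comp_coeff (hy0 : PowerSeries.constantCoeff y = 0)
    (F : PowerSeries ℚ) {k M : ℕ} (h : k < M) :
    PowerSeries.coeff k (F.comp y) =
      PowerSeries.coeff k (Polynomial.aeval y (PowerSeries.trunc M F)) := by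
  rw [aeval_coeff hy0, PowerSeries.comp, PowerSeries.coeff_mk]
  refine Finset.sum_congr rfl ?_
  intro i hi
  rw [mem_range] at hi
  rw [PowerSeries.coeff_trunc, if_pos (lt_of_lt_of_le hi h)]

private lemma comp_mul (hy0 : PowerSeries.constantCoeff y = 0)
    (F G : PowerSeries ℚ) :
    PowerSeries.comp (F * G) y = PowerSeries.comp F y * PowerSeries.comp G y := by
  ext N
  rw [comp_coeff hy0 (F * G) (Nat.lt_succ_self N)]
  have key : Polynomial.aeval y ((PowerSeries.trunc (N + 1) F) * (PowerSeries.trunc (N + 1) G))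
      = Polynomial.aeval y (PowerSeries.trunc (N + 1) F)
        * Polynomial.aeval y (PowerSeries.trunc (N + 1) G) := map_mul _ _ _
  have h2 : PowerSeries.coeff N (Polynomial.aeval y (PowerSeries.trunc (N + 1) (F * G)))
      = PowerSeries.coeff N (Polynomial.aeval y
        ((PowerSeries.trunc (N + 1) F) * (PowerSeries.trunc (N + 1) G))) := by
    rw [aeval_coeff hy0, aeval_coeff hy0]
    refine Finset.sum_congr rfl ?_
    intro i hi
    rw [mem_range] at hi
    congr 1
    rw [PowerSeries.coeff_trunc, if_pos hi, ← Polynomial.coeff_coe, Polynomial.coe_mul]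
    exact PowerSeries.coeff_mul_eq_coeff_trunc_mul_trunc F G hi
  rw [h2, key, PowerSeries.coeff_mul, PowerSeries.coeff_mul]
  refine Finset.sum_congr rfl ?_
  intro p hp
  rw [Finset.HasAntidiagonal.mem_antidiagonal] at hp
  have hp1 : p.1 < N + 1 := Nat.lt_succ_of_le (hp ▸ Nat.le_add_right _ _)
  have hp2 : p.2 < N + 1 := Nat.lt_succ_of_le (hp ▸ Nat.le_add_left _ _)
  rw [comp_coeff hy0 F hp1, comp_coeff hy0 G hp2]

private lemma comp_add (F G : PowerSeries ℚ) :
    PowerSeries.comp (F + G) y = PowerSeries.comp F y + PowerSeries.comp G y := by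
  ext N
  simp [PowerSeries.comp, PowerSeries.coeff_mk, add_mul, Finset.sum_add_distrib]

private lemma comp_sub (F G : PowerSeries ℚ) :
    PowerSeries.comp (F - G) y = PowerSeries.comp F y - PowerSeries.comp G y := by
  ext N
  simp [PowerSeries.comp, PowerSeries.coeff_mk, sub_mul, Finset.sum_sub_distrib]

private lemma comp_one : PowerSeries.comp (1 : PowerSeries ℚ) y = 1 := by
  ext N
  simp only [PowerSeries.comp, PowerSeries.coeff_mk, PowerSeries.coeff_one, ite_mul, one_mul,
    zero_mul]
  rw [Finset.sum_ite_eq' (range (N + 1)) 0 (fun n => PowerSeries.coeff N (y ^ n))]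
  simp [PowerSeries.coeff_one]

private lemma comp_X (hy0 : PowerSeries.constantCoeff y = 0) :
    PowerSeries.comp (PowerSeries.X : PowerSeries ℚ) y = y := by
  ext N
  simp only [PowerSeries.comp, PowerSeries.coeff_mk, PowerSeries.coeff_X, ite_mul, one_mul,
    zero_mul]
  rw [Finset.sum_ite_eq' (range (N + 1)) 1 (fun n => PowerSeries.coeff N (y ^ n))]
  rcases Nat.eq_zero_or_pos N with hN | hN
  · subst hN
    simp [hy0]
  · rw [if_pos (by simpa using hN), pow_one]

end CompLemmas

private lemma deriv_omega_eq (Ω : PowerSeries ℚ)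
    (hΩ : Ω = PowerSeries.mk fun n =>
      if 3 ≤ n then (-1 : ℚ) ^ (n - 1) * (Nat.factorial (n - 3)) / (Nat.factorial n) else 0) :
    PowerSeries.derivativeFun Ω = (1 + PowerSeries.X) * formalLog - PowerSeries.X := by
  ext n
  rw [show PowerSeries.derivativeFun Ω = d⁄dX ℚ Ω from rfl, PowerSeries.coeff_derivative, hΩ, PowerSeries.coeff_mk, add_mul, one_mul,
    map_sub, map_add]
  match n with
  | 0 =>
    norm_num [formalLog, PowerSeries.coeff_mk, PowerSeries.coeff_zero_X_mul]
  | 1 =>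
    norm_num [formalLog, PowerSeries.coeff_mk, PowerSeries.coeff_succ_X_mul,
      PowerSeries.coeff_X]
  | (m + 2) =>
    rw [if_pos (by omega : 3 ≤ m + 2 + 1)]
    have h1 : m + 2 + 1 - 1 = m + 2 := by omega
    have h2 : m + 2 + 1 - 3 = m := by omega
    rw [h1, h2]
    rw [PowerSeries.coeff_succ_X_mul]
    simp only [formalLog, PowerSeries.coeff_mk, PowerSeries.coeff_X]
    rw [if_neg (by omega : ¬ m + 2 = 0), if_neg (by omega : ¬ m + 1 = 0),
      if_neg (by omega : ¬ m + 2 = 1)]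
    have hfac : (Nat.factorial (m + 3) : ℚ)
        = (m + 3) * ((m + 2) * ((m + 1) * Nat.factorial m)) := by
      push_cast [Nat.factorial_succ]
      ring
    have hm1 : (m : ℚ) + 1 ≠ 0 := by positivity
    have hm2 : (m : ℚ) + 2 ≠ 0 := by positivity
    have hm3 : (m : ℚ) + 3 ≠ 0 := by positivity
    have hmf : (Nat.factorial m : ℚ) ≠ 0 := by
      exact_mod_cast Nat.factorial_ne_zero m
    rw [show m + 2 + 1 = m + 3 from rfl, hfac]
    push_cast
    rw [sub_zero]
    field_simp
    ring

/-- With `ω_n = (-1)^{n-1}(n-3)!` for `n ≥ 3`, the fixed-point series `y₀` of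
`y₀ = x + Ω₀'(y₀)` satisfies `(1+y₀) log(1+y₀) = 2 y₀ - x`. -/
theorem fixed_point_satisfies_log_eq (y : PowerSeries ℚ)
    (hy0 : PowerSeries.constantCoeff y = 0)
    (Ω : PowerSeries ℚ)
    (hΩ : Ω = PowerSeries.mk fun n =>
      if 3 ≤ n then (-1 : ℚ) ^ (n - 1) * (Nat.factorial (n - 3)) / (Nat.factorial n) else 0)
    (hfix : y = PowerSeries.X + PowerSeries.comp (PowerSeries.derivativeFun Ω) y) :
    (1 + y) * PowerSeries.comp formalLog y = 2 * y - PowerSeries.X := by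
  have hd := deriv_omega_eq Ω hΩ
  rw [hd, comp_sub, comp_mul hy0, comp_add, comp_one, comp_X hy0] at hfix
  linear_combination -hfix
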